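/- Let K be a proper nonempty subset of {1,…,N}, ε > 0, and x ∈ (ℝ²)^N satisfy R_K(x) ≤ 2ε and R_{K∪{j}}(x) ≥ 21ε for every j ∉ K. Then ‖x^i − x^j‖² ≥ ε for all i ∈ K and all j ∉ K. -/

import Mathlib

open Finset

/-- The dispersion `R_L(x)` of the points `x^i`, `i ∈ L`, around their barycenter
`S_L(x) = (1/|L|) ∑_{i∈L} x^i`. -/
noncomputable def RK {N : ℕ} (L : Finset (Fin N)) (x : Fin N → EuclideanSpace ℝ (Fin 2)) : ℝ :=
  ∑ i ∈ L, ‖x i - (L.card : ℝ)⁻¹ • ∑ j ∈ L, x j‖ ^ 2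

/-- The barycenter minimizes the sum of squared distances. -/
lemma RK_le_sum {N : ℕ} (L : Finset (Fin N)) (hL : L.Nonempty)
    (x : Fin N → EuclideanSpace ℝ (Fin 2)) (c : EuclideanSpace ℝ (Fin 2)) :
    RK L x ≤ ∑ i ∈ L, ‖x i - c‖ ^ 2 := by
  set S : EuclideanSpace ℝ (Fin 2) := (L.card : ℝ)⁻¹ • ∑ j ∈ L, x j with hS
  have hcard : (L.card : ℝ) ≠ 0 := by
    exact_mod_cast (Finset.card_pos.mpr hL).ne'
  have hsum : ∑ i ∈ L, (x i - S) = 0 := by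
    rw [Finset.sum_sub_distrib, Finset.sum_const, hS, ← Nat.cast_smul_eq_nsmul ℝ, smul_smul,
      mul_inv_cancel₀ hcard, one_smul, sub_self]
  have hc : (L.card : ℝ) * ‖S - c‖ ^ 2 = ∑ _i ∈ L, ‖S - c‖ ^ 2 := by
    rw [Finset.sum_const, nsmul_eq_mul]
  have expand : ∑ i ∈ L, ‖x i - c‖ ^ 2
      = (∑ i ∈ L, ‖x i - S‖ ^ 2) + 2 * (inner ℝ (∑ i ∈ L, (x i - S)) (S - c) : ℝ)
        + (L.card : ℝ) * ‖S - c‖ ^ 2 := by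
    rw [sum_inner, Finset.mul_sum, hc, ← Finset.sum_add_distrib, ← Finset.sum_add_distrib]
    refine Finset.sum_congr rfl fun i _ => ?_
    have h : x i - c = (x i - S) + (S - c) := by abel
    rw [h, norm_add_sq_real]
  have hRK : RK L x = ∑ i ∈ L, ‖x i - S‖ ^ 2 := rfl
  rw [expand, hsum, inner_zero_left, hRK]
  have : (0:ℝ) ≤ (L.card : ℝ) * ‖S - c‖ ^ 2 := by positivity
  linarith

theorem stmt_2 (N : ℕ) (K : Finset (Fin N)) (hK : K.Nonempty) (hKp : K ≠ Finset.univ)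
    (ε : ℝ) (hε : 0 < ε) (x : Fin N → EuclideanSpace ℝ (Fin 2))
    (h1 : RK K x ≤ 2 * ε) (h2 : ∀ j ∉ K, 21 * ε ≤ RK (insert j K) x) :
    ∀ i ∈ K, ∀ j ∉ K, ε ≤ ‖x i - x j‖ ^ 2 := by
  intro i hi j hj
  set S : EuclideanSpace ℝ (Fin 2) := (K.card : ℝ)⁻¹ • ∑ j ∈ K, x j with hS
  have hRK : ∑ k ∈ K, ‖x k - S‖ ^ 2 = RK K x := rfl
  have hb : 19 * ε ≤ ‖x j - S‖ ^ 2 := by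
    have hle := RK_le_sum (insert j K) (Finset.insert_nonempty j K) x S
    rw [Finset.sum_insert hj, hRK] at hle
    linarith [h2 j hj]
  have ha : ‖x i - S‖ ^ 2 ≤ 2 * ε := by
    have h := Finset.single_le_sum (f := fun k => ‖x k - S‖ ^ 2) (fun k _ => by positivity) hi
    linarith
  have htri : ‖x j - S‖ ≤ ‖x i - x j‖ + ‖x i - S‖ := by
    calc ‖x j - S‖ ≤ ‖x j - x i‖ + ‖x i - S‖ := norm_sub_le_norm_sub_add_norm_sub _ _ _
      _ = ‖x i - x j‖ + ‖x i - S‖ := by rw [norm_sub_rev]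
  have hd : (0:ℝ) ≤ ‖x i - x j‖ := norm_nonneg _
  have ha0 : (0:ℝ) ≤ ‖x i - S‖ := norm_nonneg _
  have hb0 : (0:ℝ) ≤ ‖x j - S‖ := norm_nonneg _
  have hba : ‖x i - S‖ ≤ ‖x j - S‖ := by nlinarith
  have hd2 : ‖x j - S‖ - ‖x i - S‖ ≤ ‖x i - x j‖ := by linarith
  have hsq : (‖x j - S‖ - ‖x i - S‖) ^ 2 ≤ ‖x i - x j‖ ^ 2 :=
    pow_le_pow_left₀ (by linarith) hd2 2
  nlinarith [sq_nonneg (‖x j - S‖ - 3 * ‖x i - S‖)]
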